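/- Let X be a metric space and f : (0, ∞) → X continuous such that for every x > 0 the sequence f(n·x) converges in X. Then f(x) converges in X as x → ∞ (no completeness assumed). -/

import Mathlib

open Filter Set


-- rational near a point in an interval
lemma ratnear (c d x θ : ℝ) (hcd : c < d) (hx : x ∈ Set.Icc c d) (hθ : 0 < θ) :
    ∃ q : ℚ, (q:ℝ) ∈ Set.Icc c d ∧ |(q:ℝ) - x| < θ := by
  rcases lt_or_eq_of_le hx.2 with hlt | heq
  · obtain ⟨q, hq1, hq2⟩ := exists_rat_btwn (lt_min hlt (by linarith : x < x + θ))
    rw [lt_min_iff] at hq2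
    exact ⟨q, ⟨by nlinarith [hx.1], hq2.1.le⟩, by rw [abs_sub_lt_iff]; constructor <;> linarith⟩
  · obtain ⟨q, hq1, hq2⟩ := exists_rat_btwn (max_lt (by linarith [hx.1] : c < x)
      (by linarith : x - θ < x))
    rw [max_lt_iff] at hq1
    exact ⟨q, ⟨hq1.1.le, by linarith [hx.2]⟩, by rw [abs_sub_lt_iff]; constructor <;> linarith⟩

-- tail covering
lemma cover (c d : ℝ) (hc : 1 ≤ c) (hcd : c < d) (M : ℕ) (hM : c / (d - c) ≤ (M:ℝ) + 1)
    (t : ℝ) (ht : ((M:ℝ)+1) * c ≤ t) :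
    ∃ k : ℕ, M + 1 ≤ k ∧ t / k ∈ Set.Icc c d := by
  have hc0 : (0:ℝ) < c := by linarith
  have hdc : (0:ℝ) < d - c := by linarith
  have htc : ((M:ℝ)+1) ≤ t / c := by rw [le_div_iff₀ hc0]; linarith
  set k := ⌊t / c⌋₊ with hk
  have hk1 : M + 1 ≤ k := by
    rw [hk]; exact_mod_cast Nat.le_floor (by push_cast; linarith)
  have hk0 : (0:ℝ) < k := by
    have : (1:ℕ) ≤ k := le_trans (by omega) hk1
    exact_mod_cast this
  have ht0 : (0:ℝ) < t := by nlinarith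
  have hfl : (k:ℝ) ≤ t / c := Nat.floor_le (by positivity)
  have hfl2 : t / c < (k:ℝ) + 1 := Nat.lt_floor_add_one _
  have hkM : ((M:ℝ)+1) ≤ (k:ℝ) := by exact_mod_cast hk1
  refine ⟨k, hk1, ?_, ?_⟩
  · rw [le_div_iff₀ hk0]
    have := (le_div_iff₀ hc0).mp hfl
    linarith
  · rw [div_le_iff₀ hk0]
    have h1 : t < ((k:ℝ) + 1) * c := by
      have := (div_lt_iff₀ hc0).mp hfl2; linarith
    have h2 : c ≤ (d - c) * ((M:ℝ)+1) := by
      rw [div_le_iff₀ hdc] at hM; linarith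
    nlinarith

lemma lrat {X : Type*} [MetricSpace X] (f : ℝ → X) (ℓ : ℝ → X)
    (hℓ : ∀ x > (0:ℝ), Tendsto (fun n : ℕ => f (n * x)) atTop (nhds (ℓ x)))
    (q : ℚ) (hq : 0 < q) : ℓ (q:ℝ) = ℓ 1 := by
  have hq0 : (0:ℝ) < (q:ℝ) := by exact_mod_cast hq
  have hd : 0 < q.den := q.pos
  have hnum : 0 < q.num := Rat.num_pos.mpr hq
  set p := q.num.toNat with hp
  have hp0 : 0 < p := by omega
  have hmulden : Tendsto (fun k : ℕ => k * q.den) atTop atTop :=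
    tendsto_atTop_mono (fun k => Nat.le_mul_of_pos_right k hd) tendsto_id
  have hmulp : Tendsto (fun k : ℕ => k * p) atTop atTop :=
    tendsto_atTop_mono (fun k => Nat.le_mul_of_pos_right k hp0) tendsto_id
  have t1 : Tendsto (fun k : ℕ => f ((k * q.den : ℕ) * (q:ℝ))) atTop (nhds (ℓ (q:ℝ))) :=
    (hℓ (q:ℝ) hq0).comp hmulden
  have t2 : Tendsto (fun k : ℕ => f ((k * p : ℕ) * (1:ℝ))) atTop (nhds (ℓ 1)) :=
    (hℓ 1 one_pos).comp hmulp
  have heq : (fun k : ℕ => f ((k * q.den : ℕ) * (q:ℝ))) =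
      (fun k : ℕ => f ((k * p : ℕ) * (1:ℝ))) := by
    funext k
    congr 1
    have hpn : ((p:ℝ)) = ((q.num : ℤ) : ℝ) := by
      rw [hp]; exact_mod_cast Int.toNat_of_nonneg hnum.le
    have : ((q.den : ℝ)) * (q:ℝ) = (p:ℝ) := by
      rw [hpn, mul_comm]
      exact_mod_cast Rat.mul_den_eq_num q
    push_cast
    rw [mul_assoc, this]
    ring
  rw [heq] at t1
  exact tendsto_nhds_unique t1 t2

lemma croft_key {X : Type*} [MetricSpace X] (f : ℝ → X)
    (hf : ContinuousOn f (Set.Ioi (0:ℝ))) (ℓ : ℝ → X)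
    (hℓ : ∀ x > (0:ℝ), Tendsto (fun n : ℕ => f (n * x)) atTop (nhds (ℓ x)))
    (hrat : ∀ q : ℚ, 0 < q → ℓ (q:ℝ) = ℓ 1)
    (ε : ℝ) (hε : 0 < ε) : ∃ T : ℝ, ∀ t ≥ T, dist (f t) (ℓ 1) ≤ 3 * ε := by
  classical
  set F : ℕ → Set ℝ := fun N => ⋂ (m : ℕ), ⋂ (n : ℕ),
    {x | x ∈ Set.Icc (1:ℝ) 2 ∧ (N ≤ m → N ≤ n →
      dist (f (((m:ℝ)+1)*x)) (f (((n:ℝ)+1)*x)) ≤ ε)} with hF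
  -- closedness
  have hFc : ∀ N, IsClosed (F N) := by
    intro N
    apply isClosed_iInter; intro m; apply isClosed_iInter; intro n
    by_cases hm : N ≤ m
    · by_cases hn : N ≤ n
      · have hset : {x | x ∈ Set.Icc (1:ℝ) 2 ∧ (N ≤ m → N ≤ n →
            dist (f (((m:ℝ)+1)*x)) (f (((n:ℝ)+1)*x)) ≤ ε)} =
            Set.Icc (1:ℝ) 2 ∩ (fun x => dist (f (((m:ℝ)+1)*x)) (f (((n:ℝ)+1)*x))) ⁻¹' Set.Iic ε := by
          ext x; simp [hm, hn]
        rw [hset]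
        have hmaps : ∀ (a : ℝ), Set.MapsTo (fun x => ((a:ℝ)+1)*x) (Set.Icc (1:ℝ) 2) (Set.Ioi 0) →
            True := fun _ _ => trivial
        have hcont : ∀ a : ℕ, ContinuousOn (fun x => f (((a:ℝ)+1)*x)) (Set.Icc (1:ℝ) 2) := by
          intro a
          apply hf.comp ((continuous_const.mul continuous_id).continuousOn)
          intro x hx
          have : (0:ℝ) < ((a:ℝ)+1)*x := by
            have := hx.1
            positivity
          exact this
        exact ContinuousOn.preimage_isClosed_of_isClosed
          (continuous_dist.comp_continuousOn ((hcont m).prodMk (hcont n))) isClosed_Icc isClosed_Iic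
      · have hset : {x | x ∈ Set.Icc (1:ℝ) 2 ∧ (N ≤ m → N ≤ n →
            dist (f (((m:ℝ)+1)*x)) (f (((n:ℝ)+1)*x)) ≤ ε)} = Set.Icc (1:ℝ) 2 := by
          ext x; simp [hn]
        rw [hset]; exact isClosed_Icc
    · have hset : {x | x ∈ Set.Icc (1:ℝ) 2 ∧ (N ≤ m → N ≤ n →
          dist (f (((m:ℝ)+1)*x)) (f (((n:ℝ)+1)*x)) ≤ ε)} = Set.Icc (1:ℝ) 2 := by
        ext x; simp [hm]
      rw [hset]; exact isClosed_Icc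
  -- covering
  have hcover : ∀ x ∈ Set.Icc (1:ℝ) 2, ∃ N, x ∈ F N := by
    intro x hx
    have hx0 : (0:ℝ) < x := by linarith [hx.1]
    obtain ⟨N, hN⟩ := (Metric.tendsto_atTop.mp (hℓ x hx0)) (ε/2) (by linarith)
    refine ⟨N, ?_⟩
    simp only [hF, Set.mem_iInter, Set.mem_setOf_eq]
    intro m n
    refine ⟨hx, fun hm hn => ?_⟩
    have h1 := hN (m+1) (by omega)
    have h2 := hN (n+1) (by omega)
    push_cast at h1 h2
    calc dist (f (((m:ℝ)+1)*x)) (f (((n:ℝ)+1)*x))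
        ≤ dist (f (((m:ℝ)+1)*x)) (ℓ x) + dist (ℓ x) (f (((n:ℝ)+1)*x)) := dist_triangle _ _ _
      _ ≤ ε/2 + ε/2 := by
          rw [dist_comm (ℓ x)]
          exact add_le_add h1.le h2.le
      _ = ε := by ring
  -- Baire category on the complete space Icc 1 2
  haveI : CompleteSpace (Set.Icc (1:ℝ) 2) := (isClosed_Icc : IsClosed (Set.Icc (1:ℝ) 2)).completeSpace_coe
  haveI : Nonempty (Set.Icc (1:ℝ) 2) := ⟨⟨1, by norm_num⟩⟩
  have hclosed : ∀ N, IsClosed ((Subtype.val : Set.Icc (1:ℝ) 2 → ℝ) ⁻¹' F N) :=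
    fun N => (hFc N).preimage continuous_subtype_val
  have hunion : ⋃ N, ((Subtype.val : Set.Icc (1:ℝ) 2 → ℝ) ⁻¹' F N) = Set.univ := by
    ext z
    simp only [Set.mem_iUnion, Set.mem_preimage, Set.mem_univ, iff_true]
    exact hcover z.val z.2
  obtain ⟨N, z, hz⟩ := nonempty_interior_of_iUnion_of_closed hclosed hunion
  rw [mem_interior_iff_mem_nhds, Metric.mem_nhds_iff] at hz
  obtain ⟨δ, hδ0, hδ⟩ := hz
  set c : ℝ := max 1 (z.val - δ/2) with hc
  set d : ℝ := min 2 (z.val + δ/2) with hd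
  have hz1 : (1:ℝ) ≤ z.val := z.2.1
  have hz2 : z.val ≤ 2 := z.2.2
  have hcd : c < d := by
    apply max_lt <;> apply lt_min <;> linarith
  have hc1 : (1:ℝ) ≤ c := le_max_left _ _
  have hsub : Set.Icc c d ⊆ F N := by
    intro y hy
    have hy12 : y ∈ Set.Icc (1:ℝ) 2 :=
      ⟨le_trans hc1 hy.1, le_trans hy.2 (min_le_left _ _)⟩
    have hmem : (⟨y, hy12⟩ : Set.Icc (1:ℝ) 2) ∈ Metric.ball z δ := by
      rw [Metric.mem_ball, Subtype.dist_eq, Real.dist_eq]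
      have h1 : z.val - δ/2 ≤ c := le_max_right _ _
      have h2 : d ≤ z.val + δ/2 := min_le_right _ _
      have := hy.1; have := hy.2
      rw [abs_sub_lt_iff]; constructor <;> linarith
    exact hδ hmem
  -- extraction of F membership
  have hFmem : ∀ {x : ℝ}, x ∈ F N → ∀ {m n : ℕ}, N ≤ m → N ≤ n →
      dist (f (((m:ℝ)+1)*x)) (f (((n:ℝ)+1)*x)) ≤ ε := by
    intro x hx m n hm hn
    simp only [hF, Set.mem_iInter, Set.mem_setOf_eq] at hx
    exact (hx m n).2 hm hn
  have hFIcc : ∀ {x : ℝ}, x ∈ F N → x ∈ Set.Icc (1:ℝ) 2 := by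
    intro x hx
    simp only [hF, Set.mem_iInter, Set.mem_setOf_eq] at hx
    exact (hx 0 0).1
  -- distance from the limit along the sequence
  have hlim : ∀ x, x ∈ F N → ∀ n : ℕ, N ≤ n → dist (ℓ x) (f (((n:ℝ)+1)*x)) ≤ ε := by
    intro x hxF n hn
    have hx0 : (0:ℝ) < x := by linarith [(hFIcc hxF).1]
    have hsh : Tendsto (fun m : ℕ => f (((m:ℝ)+1)*x)) atTop (nhds (ℓ x)) := by
      have := (hℓ x hx0).comp (tendsto_add_atTop_nat 1)
      apply this.congr
      intro m
      simp only [Function.comp_apply]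
      push_cast
      ring_nf
    have hdt : Tendsto (fun m : ℕ => dist (f (((m:ℝ)+1)*x)) (f (((n:ℝ)+1)*x))) atTop
        (nhds (dist (ℓ x) (f (((n:ℝ)+1)*x)))) := hsh.dist tendsto_const_nhds
    apply le_of_tendsto hdt
    filter_upwards [eventually_ge_atTop N] with m hm
    exact hFmem hxF hm hn
  -- the limits over the interval are close to ℓ 1
  have hLclose : ∀ x ∈ Set.Icc c d, dist (ℓ x) (ℓ 1) ≤ 2 * ε := by
    intro x hx
    have hxF : x ∈ F N := hsub hx
    have hx0 : (0:ℝ) < x := by linarith [(hFIcc hxF).1]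
    apply le_of_forall_pos_le_add
    intro η hη
    have hNx0 : (0:ℝ) < ((N:ℝ)+1)*x := by positivity
    have hfc : ContinuousAt f (((N:ℝ)+1)*x) := hf.continuousAt (Ioi_mem_nhds hNx0)
    have hg : ContinuousAt (fun y : ℝ => f (((N:ℝ)+1)*y)) x :=
      hfc.comp ((continuous_const.mul continuous_id).continuousAt)
    obtain ⟨θ, hθ0, hθ⟩ := Metric.continuousAt_iff.mp hg η hη
    obtain ⟨q, hqI, hqnear⟩ := ratnear c d x θ hcd hx hθ0
    have hq0 : (0:ℚ) < q := by
      have : (0:ℝ) < (q:ℝ) := by linarith [hqI.1]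
      exact_mod_cast this
    have hqF : (q:ℝ) ∈ F N := hsub hqI
    have hmid : dist (f (((N:ℝ)+1)*x)) (f (((N:ℝ)+1)*(q:ℝ))) < η := by
      have := hθ (show dist (q:ℝ) x < θ by rwa [Real.dist_eq])
      rwa [dist_comm] at this
    calc dist (ℓ x) (ℓ 1)
        ≤ dist (ℓ x) (f (((N:ℝ)+1)*x)) + dist (f (((N:ℝ)+1)*x)) (f (((N:ℝ)+1)*(q:ℝ)))
          + dist (f (((N:ℝ)+1)*(q:ℝ))) (ℓ 1) := dist_triangle4 _ _ _ _
      _ ≤ ε + η + ε := by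
          have h3 : dist (f (((N:ℝ)+1)*(q:ℝ))) (ℓ 1) ≤ ε := by
            rw [← hrat q hq0, dist_comm]
            exact hlim (q:ℝ) hqF N le_rfl
          have h1 := hlim x hxF N le_rfl
          linarith [hmid]
      _ = 2 * ε + η := by ring
  -- tail covering and conclusion
  have hdc0 : (0:ℝ) < d - c := by linarith
  set M : ℕ := max N ⌈c/(d-c)⌉₊ with hM
  have hMc : c/(d-c) ≤ (M:ℝ) + 1 := by
    have h1 : c/(d-c) ≤ (⌈c/(d-c)⌉₊ : ℝ) := Nat.le_ceil _
    have h2 : ((⌈c/(d-c)⌉₊ : ℕ) : ℝ) ≤ (M:ℝ) := by exact_mod_cast le_max_right N _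
    linarith
  refine ⟨((M:ℝ)+1)*c, fun t ht => ?_⟩
  obtain ⟨k, hk1, hkx⟩ := cover c d hc1 hcd M hMc t ht
  set x : ℝ := t / k with hx
  have hxF : x ∈ F N := hsub hkx
  have hk0 : (0:ℝ) < (k:ℝ) := by
    have : 1 ≤ k := by omega
    exact_mod_cast this
  have htx : t = ((k:ℝ)) * x := by
    rw [hx, mul_div_cancel₀ _ (ne_of_gt hk0)]
  have hn : N ≤ k - 1 := by
    have : N ≤ M := le_max_left _ _
    omega
  have hcast : (((k-1 : ℕ):ℝ)+1) = (k:ℝ) := by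
    have hk1' : 1 ≤ k := by omega
    push_cast [Nat.cast_sub hk1']
    ring
  calc dist (f t) (ℓ 1) ≤ dist (f t) (ℓ x) + dist (ℓ x) (ℓ 1) := dist_triangle _ _ _
    _ ≤ ε + 2 * ε := by
        have h1 : dist (f t) (ℓ x) ≤ ε := by
          have := hlim x hxF (k-1) hn
          rw [hcast, ← htx, dist_comm] at this
          exact this
        exact add_le_add h1 (hLclose x hkx)
    _ = 3 * ε := by ring

theorem croft_metric {X : Type*} [MetricSpace X]
    (f : ℝ → X) (hf : ContinuousOn f (Set.Ioi (0:ℝ)))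
    (h : ∀ x > (0:ℝ), ∃ L : X, Filter.Tendsto (fun n : ℕ => f (n * x)) Filter.atTop (nhds L)) :
    ∃ L : X, Filter.Tendsto f Filter.atTop (nhds L) := by
  classical
  set ℓ : ℝ → X := fun x => if hx : 0 < x then (h x hx).choose else f 1 with hℓdef
  have hℓ : ∀ x > (0:ℝ), Tendsto (fun n : ℕ => f (n * x)) atTop (nhds (ℓ x)) := by
    intro x hx
    simp only [hℓdef, dif_pos hx]
    exact (h x hx).choose_spec
  have hrat : ∀ q : ℚ, 0 < q → ℓ (q:ℝ) = ℓ 1 := lrat f ℓ hℓ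
  refine ⟨ℓ 1, ?_⟩
  rw [Metric.tendsto_atTop]
  intro ε hε
  obtain ⟨T, hT⟩ := croft_key f hf ℓ hℓ hrat (ε/4) (by linarith)
  exact ⟨T, fun t ht => lt_of_le_of_lt (hT t ht) (by linarith)⟩
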